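/- arXiv:1310.5292 — 3 statements merged into one kernel-verified Lean document; each statement's English description precedes it below -/
import Mathlib

section
/- Let G be a connected graph on n ≥ 2 vertices with transmissions 𝔻₁ ≥ 𝔻₂ ≥ ... ≥ 𝔻_n and diameter d. Then for each 1 ≤ i ≤ n, the distance spectral radius satisfies ρ(𝔻(G)) ≤ (𝔻_i − d + √((𝔻_i + d)² + 4d·Σ_{k=1}^{i−1}(𝔻_k − 𝔻_i)))/2, with equality if and only if 𝔻₁ = 𝔻₂ = ... = 𝔻_n. -/
open Matrix Finset Real

/-- Spectral radius: largest modulus of a complex eigenvalue (root of the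
characteristic polynomial). -/
noncomputable def specRad {n : ℕ} (A : Matrix (Fin n) (Fin n) ℝ) : ℝ :=
  (((A.map (Complex.ofReal)).charpoly.roots).map (fun z => ‖z‖)).foldr max 0

/-- Irreducibility of a nonnegative matrix. -/
def Irred {n : ℕ} (A : Matrix (Fin n) (Fin n) ℝ) : Prop :=
  ∀ i j : Fin n, ∃ k : ℕ, 0 < (A ^ k) i j

private lemma foldr_max_le (b : ℝ) (hb : 0 ≤ b) :
    ∀ s : Multiset ℝ, (∀ x ∈ s, x ≤ b) → s.foldr max 0 ≤ b := by
  intro s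
  induction s using Multiset.induction_on with
  | empty => intro _; simpa using hb
  | cons a s ih =>
    intro h
    rw [Multiset.foldr_cons]
    exact max_le (h a (Multiset.mem_cons_self a s)) (ih fun x hx => h x (Multiset.mem_cons_of_mem hx))

private lemma le_foldr_max (a : ℝ) :
    ∀ s : Multiset ℝ, a ∈ s → a ≤ s.foldr max 0 := by
  intro s
  induction s using Multiset.induction_on with
  | empty => intro h; simp at h
  | cons a' s ih =>
    intro h
    rw [Multiset.foldr_cons]
    rcases Multiset.mem_cons.mp h with h | h
    · exact h ▸ le_max_left _ _
    · exact le_trans (ih h) (le_max_right _ _)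

private lemma isRoot_charpoly_iff {n : ℕ} (M : Matrix (Fin n) (Fin n) ℂ) (t : ℂ) :
    M.charpoly.IsRoot t ↔ ∃ v : Fin n → ℂ, v ≠ 0 ∧ M *ᵥ v = t • v := by
  have hmap : (Matrix.charmatrix M).map (Polynomial.evalRingHom t) =
      t • (1 : Matrix (Fin n) (Fin n) ℂ) - M := by
    ext a b
    by_cases h : a = b
    · subst h
      simp [Matrix.charmatrix_apply, Matrix.one_apply, Matrix.smul_apply]
    · simp [Matrix.charmatrix_apply, Matrix.one_apply_ne h, Matrix.diagonal_apply_ne _ h, h]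
  have hdet : M.charpoly.eval t = (t • (1 : Matrix (Fin n) (Fin n) ℂ) - M).det := by
    have h1 : M.charpoly.eval t = (Polynomial.evalRingHom t) (Matrix.charmatrix M).det := rfl
    rw [h1, RingHom.map_det, RingHom.mapMatrix_apply, hmap]
  unfold Polynomial.IsRoot
  rw [hdet]
  constructor
  · intro h
    obtain ⟨v, hv0, hv⟩ := Matrix.exists_mulVec_eq_zero_iff.mpr h
    refine ⟨v, hv0, ?_⟩
    rw [Matrix.sub_mulVec, Matrix.smul_mulVec, Matrix.one_mulVec, sub_eq_zero] at hv
    exact hv.symm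
  · rintro ⟨v, hv0, hv⟩
    apply Matrix.exists_mulVec_eq_zero_iff.mp
    refine ⟨v, hv0, ?_⟩
    rw [Matrix.sub_mulVec, Matrix.smul_mulVec, Matrix.one_mulVec, hv, sub_self]

private lemma le_specRad_of_eig {n : ℕ} (A : Matrix (Fin n) (Fin n) ℝ) {lam : ℝ}
    (h0 : 0 ≤ lam) {v : Fin n → ℝ} (hv : v ≠ 0) (heig : A *ᵥ v = lam • v) :
    lam ≤ specRad A := by
  have hroot : (A.map Complex.ofReal).charpoly.IsRoot (lam : ℂ) := by
    rw [isRoot_charpoly_iff]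
    refine ⟨fun j => (v j : ℂ), ?_, ?_⟩
    · intro h
      apply hv
      funext j
      have := congrFun h j
      simpa using this
    · funext j
      have hj := congrFun heig j
      simp only [Matrix.mulVec, dotProduct, Pi.smul_apply, smul_eq_mul] at hj
      simp only [Matrix.mulVec, dotProduct, Pi.smul_apply, smul_eq_mul, Matrix.map_apply]
      exact_mod_cast hj
  have hmem : (lam : ℂ) ∈ (A.map Complex.ofReal).charpoly.roots := by
    rw [Polynomial.mem_roots']
    exact ⟨(Matrix.charpoly_monic _).ne_zero, hroot⟩
  have habs : ‖(lam : ℂ)‖ = lam := by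
    rw [Complex.norm_real, Real.norm_of_nonneg h0]
  have : ‖(lam : ℂ)‖ ∈
      ((A.map Complex.ofReal).charpoly.roots).map (fun z => ‖z‖) :=
    Multiset.mem_map_of_mem _ hmem
  have := le_foldr_max _ _ this
  rw [habs] at this
  exact this

private lemma specRad_le_of {n : ℕ} (A : Matrix (Fin n) (Fin n) ℝ)
    (hnn : ∀ i j, 0 ≤ A i j) {μ : ℝ} (hμ : 0 ≤ μ)
    (hray : ∀ x : Fin n → ℝ, x ⬝ᵥ (A *ᵥ x) ≤ μ * (x ⬝ᵥ x)) : specRad A ≤ μ := by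
  apply foldr_max_le μ hμ
  intro x hx
  obtain ⟨ζ, hζ, rfl⟩ := Multiset.mem_map.mp hx
  have hroot : (A.map Complex.ofReal).charpoly.IsRoot ζ := (Polynomial.mem_roots'.mp hζ).2
  obtain ⟨v, hv0, heig⟩ := (isRoot_charpoly_iff _ _).mp hroot
  set w : Fin n → ℝ := fun j => ‖v j‖ with hw
  have hwnn : ∀ j, 0 ≤ w j := fun j => norm_nonneg _
  have h1 : ∀ j, ‖ζ‖ * w j ≤ ∑ k, A j k * w k := by
    intro j
    have hj := congrFun heig j
    simp only [Matrix.mulVec, dotProduct, Pi.smul_apply, smul_eq_mul,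
      Matrix.map_apply] at hj
    calc ‖ζ‖ * w j = ‖ζ * v j‖ := by rw [norm_mul]
      _ = ‖∑ k, (A j k : ℂ) * v k‖ := by rw [← hj]
      _ ≤ ∑ k, ‖(A j k : ℂ) * v k‖ := norm_sum_le _ _
      _ = ∑ k, A j k * w k := by
          refine Finset.sum_congr rfl fun k _ => ?_
          rw [norm_mul, Complex.norm_real, Real.norm_of_nonneg (hnn j k)]
  have h3 : 0 < w ⬝ᵥ w := by
    obtain ⟨j, hj⟩ : ∃ j, v j ≠ 0 := by
      by_contra h
      push_neg at h
      exact hv0 (funext h)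
    have hwj : 0 < w j := by
      simp only [hw]
      exact norm_pos_iff.mpr hj
    have hjj : 0 < w j * w j := mul_pos hwj hwj
    refine lt_of_lt_of_le hjj ?_
    exact Finset.single_le_sum (fun k _ => mul_nonneg (hwnn k) (hwnn k)) (Finset.mem_univ j)
  have h2 : ‖ζ‖ * (w ⬝ᵥ w) ≤ w ⬝ᵥ (A *ᵥ w) := by
    show ‖ζ‖ * (∑ j, w j * w j) ≤ ∑ j, w j * (∑ k, A j k * w k)
    rw [Finset.mul_sum]
    refine Finset.sum_le_sum fun j _ => ?_
    calc ‖ζ‖ * (w j * w j) = w j * (‖ζ‖ * w j) := by ring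
      _ ≤ w j * ∑ k, A j k * w k := mul_le_mul_of_nonneg_left (h1 j) (hwnn j)
  have h4 := le_trans h2 (hray w)
  exact le_of_mul_le_mul_right (by linarith) h3

private lemma dot_mulVec_symm {n : ℕ} (A : Matrix (Fin n) (Fin n) ℝ) (hsym : A.IsSymm)
    (p q : Fin n → ℝ) : p ⬝ᵥ (A *ᵥ q) = q ⬝ᵥ (A *ᵥ p) := by
  rw [Matrix.dotProduct_mulVec, ← Matrix.mulVec_transpose, hsym, dotProduct_comm]

private lemma rayleigh_perron {n : ℕ} (hn : 0 < n) (A : Matrix (Fin n) (Fin n) ℝ)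
    (hsym : A.IsSymm) (hnn : ∀ i j, 0 ≤ A i j) :
    ∃ (μ : ℝ) (z : Fin n → ℝ), 0 ≤ μ ∧ z ≠ 0 ∧ (∀ v, 0 ≤ z v) ∧ A *ᵥ z = μ • z ∧
      ∀ x : Fin n → ℝ, x ⬝ᵥ (A *ᵥ x) ≤ μ * (x ⬝ᵥ x) := by
  classical
  set f : (Fin n → ℝ) → ℝ := fun x => x ⬝ᵥ (A *ᵥ x) with hf
  have hfd : ∀ x, f x = ∑ j, ∑ k, A j k * (x j * x k) := by
    intro x
    show (∑ j, x j * (∑ k, A j k * x k)) = _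
    refine Finset.sum_congr rfl fun j _ => ?_
    rw [Finset.mul_sum]
    exact Finset.sum_congr rfl fun k _ => by ring
  have hfc : Continuous f := by
    have : f = fun x => ∑ j, x j * ∑ k, A j k * x k := rfl
    rw [this]
    exact continuous_finset_sum _ fun j _ =>
      (continuous_apply j).mul (continuous_finset_sum _ fun k _ =>
        continuous_const.mul (continuous_apply k))
  set Sph : Set (Fin n → ℝ) := {x | x ⬝ᵥ x = 1} with hSph
  have hdc : Continuous fun x : Fin n → ℝ => x ⬝ᵥ x := by
    have : (fun x : Fin n → ℝ => x ⬝ᵥ x) = fun x => ∑ j, x j * x j := rfl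
    rw [this]
    exact continuous_finset_sum _ fun j _ => (continuous_apply j).mul (continuous_apply j)
  have hclosed : IsClosed Sph := isClosed_singleton.preimage hdc
  have hbdd : Bornology.IsBounded Sph := by
    apply (Metric.isBounded_closedBall (x := (0 : Fin n → ℝ)) (r := 1)).subset
    intro x hx
    rw [Metric.mem_closedBall, dist_zero_right]
    rw [pi_norm_le_iff_of_nonneg zero_le_one]
    intro j
    rw [Real.norm_eq_abs, abs_le_one_iff_mul_self_le_one]
    have hsum : (∑ k, x k * x k) = 1 := hx
    have := Finset.single_le_sum (f := fun k => x k * x k)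
      (fun k _ => mul_self_nonneg _) (Finset.mem_univ j)
    have h2 : x j * x j ≤ ∑ k, x k * x k := by simpa using this
    linarith
  have hcpt : IsCompact Sph := Metric.isCompact_of_isClosed_isBounded hclosed hbdd
  have he : (Pi.single (⟨0, hn⟩ : Fin n) (1 : ℝ)) ∈ Sph := by
    show (Pi.single (⟨0, hn⟩ : Fin n) (1 : ℝ)) ⬝ᵥ _ = 1
    simp [dotProduct, Pi.single_apply]
  obtain ⟨x₀, hx₀, hmax⟩ := hcpt.exists_isMaxOn ⟨_, he⟩ hfc.continuousOn
  have hmax' : ∀ y ∈ Sph, f y ≤ f x₀ := fun y hy => hmax hy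
  set z : Fin n → ℝ := fun j => |x₀ j| with hz
  have hzS : z ∈ Sph := by
    show (∑ k, z k * z k) = 1
    have hsum : (∑ k, x₀ k * x₀ k) = 1 := hx₀
    rw [← hsum]
    exact Finset.sum_congr rfl fun k _ => abs_mul_abs_self _
  have hfz : f x₀ ≤ f z := by
    rw [hfd, hfd]
    refine Finset.sum_le_sum fun j _ => Finset.sum_le_sum fun k _ => ?_
    refine mul_le_mul_of_nonneg_left ?_ (hnn j k)
    calc x₀ j * x₀ k ≤ |x₀ j * x₀ k| := le_abs_self _
      _ = z j * z k := abs_mul _ _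
  have hfzmax : f z = f x₀ := le_antisymm (hmax' z hzS) hfz
  set μ : ℝ := f z with hμdef
  have hzz : z ⬝ᵥ z = 1 := hzS
  have hray : ∀ x, f x ≤ μ * (x ⬝ᵥ x) := by
    intro x
    rcases eq_or_ne x 0 with rfl | hx
    · simp [hf]
    · have hxxnn : 0 ≤ x ⬝ᵥ x := Finset.sum_nonneg fun k _ => mul_self_nonneg _
      have hxx : 0 < x ⬝ᵥ x := by
        rcases lt_or_eq_of_le hxxnn with h | h
        · exact h
        · exact absurd (dotProduct_self_eq_zero.mp h.symm) hx
      set cc := Real.sqrt (x ⬝ᵥ x) with hcc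
      have hc : 0 < cc := Real.sqrt_pos.mpr hxx
      have hc2 : cc * cc = x ⬝ᵥ x := Real.mul_self_sqrt hxx.le
      have hmem : (cc⁻¹ • x) ∈ Sph := by
        show (cc⁻¹ • x) ⬝ᵥ (cc⁻¹ • x) = 1
        rw [smul_dotProduct, dotProduct_smul, smul_eq_mul, smul_eq_mul, ← hc2]
        field_simp
      have h1 := hmax' _ hmem
      have hfscale : f (cc⁻¹ • x) = cc⁻¹ * cc⁻¹ * f x := by
        show (cc⁻¹ • x) ⬝ᵥ (A *ᵥ (cc⁻¹ • x)) = _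
        rw [Matrix.mulVec_smul, smul_dotProduct, dotProduct_smul,
          smul_eq_mul, smul_eq_mul]
        ring
      rw [hfscale, ← hfzmax] at h1
      have hgoal : f x = (x ⬝ᵥ x) * (cc⁻¹ * cc⁻¹ * f x) := by
        rw [← hc2]
        field_simp
      rw [hgoal]
      calc (x ⬝ᵥ x) * (cc⁻¹ * cc⁻¹ * f x) ≤ (x ⬝ᵥ x) * μ :=
            mul_le_mul_of_nonneg_left h1 hxxnn
        _ = μ * (x ⬝ᵥ x) := mul_comm _ _
  have heig : A *ᵥ z = μ • z := by
    have key : ∀ y : Fin n → ℝ, y ⬝ᵥ (A *ᵥ z) = μ * (y ⬝ᵥ z) := by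
      intro y
      set a : ℝ := μ * (y ⬝ᵥ y) - f y with ha
      set b : ℝ := 2 * (μ * (y ⬝ᵥ z) - y ⬝ᵥ (A *ᵥ z)) with hb
      have ha0 : 0 ≤ a := by
        have := hray y
        rw [ha]
        linarith
      have hq : ∀ t : ℝ, 0 ≤ a * t ^ 2 + b * t := by
        intro t
        have h1 := hray (z + t • y)
        have hexp : f (z + t • y) = f z + 2 * t * (y ⬝ᵥ (A *ᵥ z)) + t ^ 2 * f y := by
          simp only [hf]
          rw [Matrix.mulVec_add, Matrix.mulVec_smul, dotProduct_add,
            add_dotProduct, add_dotProduct, dotProduct_smul,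
            smul_dotProduct, smul_dotProduct, dotProduct_smul,
            smul_eq_mul, smul_eq_mul, smul_eq_mul, smul_eq_mul]
          rw [dot_mulVec_symm A hsym z y]
          ring
        have hd2 : (z + t • y) ⬝ᵥ (z + t • y) = 1 + 2 * t * (y ⬝ᵥ z) + t ^ 2 * (y ⬝ᵥ y) := by
          rw [dotProduct_add, add_dotProduct, add_dotProduct,
            dotProduct_smul, smul_dotProduct, smul_dotProduct,
            dotProduct_smul, smul_eq_mul, smul_eq_mul, smul_eq_mul, smul_eq_mul, hzz,
            dotProduct_comm z y]
          ring
        rw [hexp, hd2] at h1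
        have h2 : μ * (1 + 2 * t * (y ⬝ᵥ z) + t ^ 2 * (y ⬝ᵥ y)) -
            (f z + 2 * t * (y ⬝ᵥ (A *ᵥ z)) + t ^ 2 * f y) = a * t ^ 2 + b * t := by
          have hfzμ : f z = μ := rfl
          rw [ha, hb, hfzμ]
          ring
        linarith
      have hb0 : b = 0 := by
        by_contra hbne
        have hA1 : (0 : ℝ) < a + 1 := by linarith
        have h' := hq (-(b / (a + 1)))
        have heq2 : a * (-(b / (a + 1))) ^ 2 + b * (-(b / (a + 1))) = -(b ^ 2 / (a + 1)) *
            (1 - a / (a + 1)) := by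
          field_simp
          ring
        have hlt : (0 : ℝ) < 1 - a / (a + 1) := by
          rw [sub_pos, div_lt_one hA1]
          linarith
        have hbb : (0 : ℝ) < b ^ 2 / (a + 1) := by positivity
        nlinarith
      rw [hb] at hb0
      linarith
    have hw : (A *ᵥ z - μ • z) ⬝ᵥ (A *ᵥ z - μ • z) = 0 := by
      rw [dotProduct_sub, dotProduct_smul, smul_eq_mul,
        key (A *ᵥ z - μ • z), dotProduct_comm]
      ring
    have := dotProduct_self_eq_zero.mp hw
    have := sub_eq_zero.mp this
    exact this
  have hμ0 : 0 ≤ μ := by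
    rw [hμdef, hfd]
    refine Finset.sum_nonneg fun j _ => Finset.sum_nonneg fun k _ => ?_
    exact mul_nonneg (hnn j k) (mul_nonneg (abs_nonneg _) (abs_nonneg _))
  have hz0 : z ≠ 0 := by
    intro h
    rw [h] at hzz
    simp [dotProduct] at hzz
  exact ⟨μ, z, hμ0, hz0, fun v => abs_nonneg _, heig, hray⟩

theorem stmt_12 {n : ℕ} (hn : 2 ≤ n) (G : SimpleGraph (Fin n)) (hconn : G.Connected)
    (D : Fin n → ℝ) (hD : ∀ i, D i = ∑ j, (G.dist i j : ℝ))
    (hord : ∀ i j : Fin n, i ≤ j → D j ≤ D i)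
    (d : ℕ) (hd : IsGreatest {k | ∃ i j : Fin n, k = G.dist i j} d) :
    ∀ i : Fin n,
      specRad (Matrix.of fun i j : Fin n => (G.dist i j : ℝ)) ≤
        (D i - (d : ℝ) +
          Real.sqrt ((D i + (d : ℝ)) ^ 2 +
            4 * (d : ℝ) * ∑ k ∈ Finset.Iio i, (D k - D i))) / 2 ∧
      (specRad (Matrix.of fun i j : Fin n => (G.dist i j : ℝ)) =
        (D i - (d : ℝ) +
          Real.sqrt ((D i + (d : ℝ)) ^ 2 +
            4 * (d : ℝ) * ∑ k ∈ Finset.Iio i, (D k - D i))) / 2 ↔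
        ∀ j k : Fin n, D j = D k) := by
  intro i
  classical
  set A : Matrix (Fin n) (Fin n) ℝ := Matrix.of fun i j : Fin n => (G.dist i j : ℝ) with hAdef
  have hAapp : ∀ a b : Fin n, A a b = (G.dist a b : ℝ) := fun a b => rfl
  have hAsym : A.IsSymm := by
    apply Matrix.ext
    intro a b
    show A b a = A a b
    rw [hAapp, hAapp, SimpleGraph.dist_comm]
  have hAnn : ∀ a b, 0 ≤ A a b := fun a b => Nat.cast_nonneg _
  have hAdiag : ∀ a, A a a = 0 := fun a => by
    rw [hAapp]
    simp
  have hAlb : ∀ a b, a ≠ b → (1 : ℝ) ≤ A a b := fun a b h => by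
    rw [hAapp]
    exact_mod_cast hconn.pos_dist_of_ne h
  have hAub : ∀ a b, A a b ≤ (d : ℝ) := fun a b => by
    rw [hAapp]
    exact_mod_cast hd.2 ⟨a, b, rfl⟩
  have hT : ∀ v, (∑ j, A v j) = D v := fun v => (hD v).symm
  have h0n : 0 < n := by omega
  have hi01 : (⟨0, by omega⟩ : Fin n) ≠ ⟨1, by omega⟩ := by
    simp [Fin.ext_iff]
  have hother : ∀ v : Fin n, ∃ w, w ≠ v := by
    intro v
    by_cases h : v = ⟨0, by omega⟩
    · exact ⟨⟨1, by omega⟩, by rw [h]; exact hi01.symm⟩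
    · exact ⟨⟨0, by omega⟩, fun hh => h hh.symm⟩
  have hd1 : (1 : ℝ) ≤ (d : ℝ) := le_trans (hAlb _ _ hi01) (hAub _ _)
  have hDpos : ∀ v, 0 < D v := by
    intro v
    obtain ⟨w, hw⟩ := hother v
    rw [← hT v]
    calc (0 : ℝ) < A v w := lt_of_lt_of_le one_pos (hAlb v w (Ne.symm hw))
      _ ≤ ∑ j, A v j := Finset.single_le_sum (fun j _ => hAnn v j) (Finset.mem_univ w)
  set S : ℝ := ∑ k ∈ Finset.Iio i, (D k - D i) with hSdef
  have hS0 : 0 ≤ S :=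
    Finset.sum_nonneg fun k hk =>
      sub_nonneg.mpr (hord k i (le_of_lt (Finset.mem_Iio.mp hk)))
  set φ : ℝ := (D i - (d : ℝ) +
      Real.sqrt ((D i + (d : ℝ)) ^ 2 + 4 * (d : ℝ) * S)) / 2 with hφdef
  have hin : 0 ≤ (D i + (d : ℝ)) ^ 2 + 4 * (d : ℝ) * S := by positivity
  have hr : Real.sqrt ((D i + (d : ℝ)) ^ 2 + 4 * (d : ℝ) * S) ^ 2 =
      (D i + (d : ℝ)) ^ 2 + 4 * (d : ℝ) * S := Real.sq_sqrt hin
  have hDid : (0 : ℝ) ≤ D i + (d : ℝ) := by linarith [hDpos i, hd1]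
  have hrge : D i + (d : ℝ) ≤ Real.sqrt ((D i + (d : ℝ)) ^ 2 + 4 * (d : ℝ) * S) :=
    Real.le_sqrt_of_sq_le (by nlinarith)
  have hφge : D i ≤ φ := by
    rw [hφdef]
    linarith
  set c : ℝ := φ + (d : ℝ) with hcdef
  have hcpos : 0 < c := by
    have := hDpos i
    rw [hcdef]
    linarith
  have hkey : φ * c = D i * c + (d : ℝ) * S := by
    have h2 : 2 * φ - (D i - (d : ℝ)) =
        Real.sqrt ((D i + (d : ℝ)) ^ 2 + 4 * (d : ℝ) * S) := by
      rw [hφdef]; ring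
    have h3 : (2 * φ - (D i - (d : ℝ))) ^ 2 = (D i + (d : ℝ)) ^ 2 + 4 * (d : ℝ) * S := by
      rw [h2]; exact hr
    rw [hcdef]
    linear_combination h3 / 4
  set m : Fin n → ℝ := fun v => max (D v - D i) 0 with hm
  have hm0 : ∀ v, 0 ≤ m v := fun v => le_max_right _ _
  have hmsum : (∑ v, m v) = S := by
    have h1 : (∑ k ∈ Finset.Iio i, m k) = ∑ v, m v := by
      apply Finset.sum_subset (Finset.subset_univ _)
      intro x _ hx
      have hix : i ≤ x := le_of_not_gt fun hlt => hx (Finset.mem_Iio.mpr hlt)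
      show max (D x - D i) 0 = 0
      exact max_eq_right (sub_nonpos.mpr (hord i x hix))
    rw [← h1, hSdef]
    refine Finset.sum_congr rfl fun k hk => ?_
    exact max_eq_left (sub_nonneg.mpr (hord k i (le_of_lt (Finset.mem_Iio.mp hk))))
  set u : Fin n → ℝ := fun v => m v + c with hu
  have hupos : ∀ v, 0 < u v := fun v => add_pos_of_nonneg_of_pos (hm0 v) hcpos
  have hstep2 : ∀ v, D v ≤ m v + D i := by
    intro v
    have := le_max_left (D v - D i) 0
    show D v ≤ max (D v - D i) 0 + D i
    linarith
  have hAvu : ∀ v, (A *ᵥ u) v = (∑ x, A v x * m x) + c * D v := by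
    intro v
    show (∑ x, A v x * (m x + c)) = _
    have h1 : ∀ x, A v x * (m x + c) = A v x * m x + A v x * c := fun x => by ring
    rw [Finset.sum_congr rfl fun x _ => h1 x, Finset.sum_add_distrib, ← Finset.sum_mul,
      hT v, mul_comm (D v) c]
  have hstep1 : ∀ v, (∑ x, A v x * m x) ≤ (d : ℝ) * (S - m v) := by
    intro v
    have e1 : (∑ x ∈ Finset.univ.erase v, A v x * m x) = ∑ x, A v x * m x :=
      Finset.sum_erase _ (by rw [hAdiag v, zero_mul])
    rw [← e1]
    have e2 : (∑ x ∈ Finset.univ.erase v, A v x * m x) ≤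
        ∑ x ∈ Finset.univ.erase v, (d : ℝ) * m x :=
      Finset.sum_le_sum fun x _ => mul_le_mul_of_nonneg_right (hAub v x) (hm0 x)
    have e3 : (∑ x ∈ Finset.univ.erase v, (d : ℝ) * m x) = (d : ℝ) * (S - m v) := by
      rw [← Finset.mul_sum, Finset.sum_erase_eq_sub (Finset.mem_univ v), hmsum]
    linarith
  have hAu : ∀ v, (A *ᵥ u) v ≤ φ * u v := by
    intro v
    rw [hAvu v]
    have h4 : c * D v ≤ c * (m v + D i) := mul_le_mul_of_nonneg_left (hstep2 v) hcpos.le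
    have h5 : c * m v = φ * m v + (d : ℝ) * m v := by rw [hcdef]; ring
    have h6 : φ * u v = φ * m v + φ * c := by
      show φ * (m v + c) = _
      ring
    rw [h6]
    have := hstep1 v
    linarith [hkey]
  obtain ⟨μ, z, hμ0, hz0, hznn, heig, hray⟩ := rayleigh_perron h0n A hAsym hAnn
  have hρ : specRad A = μ :=
    le_antisymm (specRad_le_of A hAnn hμ0 hray) (le_specRad_of_eig A hμ0 hz0 heig)
  have hzA : A *ᵥ z = specRad A • z := by rw [hρ]; exact heig
  have hzupos : 0 < z ⬝ᵥ u := by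
    obtain ⟨v0, hv0⟩ : ∃ v, z v ≠ 0 := by
      by_contra h
      push_neg at h
      exact hz0 (funext h)
    have hv0' : 0 < z v0 := lt_of_le_of_ne (hznn v0) (Ne.symm hv0)
    show 0 < ∑ k, z k * u k
    exact Finset.sum_pos' (fun k _ => mul_nonneg (hznn k) (hupos k).le)
      ⟨v0, Finset.mem_univ v0, mul_pos hv0' (hupos v0)⟩
  have hzAu : z ⬝ᵥ (A *ᵥ u) = specRad A * (z ⬝ᵥ u) := by
    rw [dot_mulVec_symm A hAsym z u, hzA, dotProduct_smul, smul_eq_mul,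
      dotProduct_comm]
  have hmain : specRad A * (z ⬝ᵥ u) ≤ φ * (z ⬝ᵥ u) := by
    rw [← hzAu]
    have h2 : φ * (z ⬝ᵥ u) = ∑ k, z k * (φ * u k) := by
      show φ * (∑ k, z k * u k) = _
      rw [Finset.mul_sum]
      exact Finset.sum_congr rfl fun k _ => by ring
    rw [h2]
    show (∑ k, z k * (A *ᵥ u) k) ≤ _
    exact Finset.sum_le_sum fun k _ => mul_le_mul_of_nonneg_left (hAu k) (hznn k)
  have hineq : specRad A ≤ φ := le_of_mul_le_mul_right hmain hzupos
  refine ⟨hineq, ?_, ?_⟩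
  · -- equality → all transmissions equal
    intro heq
    suffices hDall : ∀ v, D v = D i by
      intro a b
      rw [hDall a, hDall b]
    have hzpos : ∀ v, 0 < z v := by
      obtain ⟨v0, hv0'⟩ : ∃ v0, 0 < z v0 := by
        obtain ⟨v0, h⟩ : ∃ v, z v ≠ 0 := by
          by_contra h
          push_neg at h
          exact hz0 (funext h)
        exact ⟨v0, lt_of_le_of_ne (hznn v0) (Ne.symm h)⟩
      intro v
      by_contra hv
      have hzv : z v = 0 := le_antisymm (not_lt.mp hv) (hznn v)
      have hvne : v ≠ v0 := by
        intro h
        rw [h] at hzv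
        rw [hzv] at hv0'
        exact lt_irrefl 0 hv0'
      have h1 : (A *ᵥ z) v = specRad A * z v := by
        have := congrFun hzA v
        simpa using this
      have h2 : 0 < (A *ᵥ z) v := by
        show 0 < ∑ k, A v k * z k
        have hs := Finset.single_le_sum (f := fun k => A v k * z k)
          (fun k _ => mul_nonneg (hAnn v k) (hznn k)) (Finset.mem_univ v0)
        have hpos : 0 < A v v0 * z v0 :=
          mul_pos (lt_of_lt_of_le one_pos (hAlb v v0 hvne)) hv0'
        have hs' : A v v0 * z v0 ≤ ∑ k, A v k * z k := by simpa using hs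
        linarith
      rw [h1, hzv, mul_zero] at h2
      exact lt_irrefl 0 h2
    have hent : ∀ v, (A *ᵥ u) v = φ * u v := by
      have hsump : (∑ v, z v * (φ * u v - (A *ᵥ u) v)) = 0 := by
        have e1 : (∑ v, z v * (φ * u v - (A *ᵥ u) v)) =
            φ * (z ⬝ᵥ u) - z ⬝ᵥ (A *ᵥ u) := by
          show _ = φ * (∑ v, z v * u v) - ∑ v, z v * (A *ᵥ u) v
          rw [Finset.mul_sum, ← Finset.sum_sub_distrib]
          exact Finset.sum_congr rfl fun v _ => by ring
        rw [e1, hzAu, heq]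
        ring
      intro v
      have h1 := (Finset.sum_eq_zero_iff_of_nonneg
        (fun k _ => mul_nonneg (hzpos k).le (sub_nonneg.mpr (hAu k)))).mp hsump v
        (Finset.mem_univ v)
      rcases mul_eq_zero.mp h1 with h | h
      · exact absurd h (hzpos v).ne'
      · linarith
    have hs1 : ∀ v, (∑ x ∈ Finset.univ.erase v, ((d : ℝ) - A v x) * m x) =
        -(c * (m v + D i - D v)) := by
      intro v
      have h2 : (∑ x, A v x * m x) = φ * m v + φ * c - c * D v := by
        have h3 : (∑ x, A v x * m x) + c * D v = φ * u v := by
          rw [← hAvu v, hent v]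
        have h4 : φ * u v = φ * m v + φ * c := by
          show φ * (m v + c) = _
          ring
        linarith
      have hsum1 : (∑ x ∈ Finset.univ.erase v, ((d : ℝ) - A v x) * m x) =
          (d : ℝ) * (S - m v) - ∑ x, A v x * m x := by
        have h5 : ∀ x, ((d : ℝ) - A v x) * m x = (d : ℝ) * m x - A v x * m x :=
          fun x => by ring
        rw [Finset.sum_congr rfl fun x _ => h5 x, Finset.sum_sub_distrib]
        congr 1
        · rw [← Finset.mul_sum, Finset.sum_erase_eq_sub (Finset.mem_univ v), hmsum]
        · exact Finset.sum_erase _ (by rw [hAdiag v, zero_mul])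
      rw [hsum1, h2]
      linear_combination -hkey + m v * hcdef
    have hev : ∀ v, (m v + D i - D v = 0) ∧
        ∀ x ∈ Finset.univ.erase v, ((d : ℝ) - A v x) * m x = 0 := by
      intro v
      have hnn' : ∀ x ∈ Finset.univ.erase v, 0 ≤ ((d : ℝ) - A v x) * m x :=
        fun x _ => mul_nonneg (sub_nonneg.mpr (hAub v x)) (hm0 x)
      have hsge : 0 ≤ ∑ x ∈ Finset.univ.erase v, ((d : ℝ) - A v x) * m x :=
        Finset.sum_nonneg hnn'
      have hele : 0 ≤ m v + D i - D v := by linarith [hstep2 v]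
      have hce : 0 ≤ c * (m v + D i - D v) := mul_nonneg hcpos.le hele
      have h0 : (∑ x ∈ Finset.univ.erase v, ((d : ℝ) - A v x) * m x) = 0 := by
        have := hs1 v
        linarith
      constructor
      · have hc0 : c * (m v + D i - D v) = 0 := by
          have := hs1 v
          linarith
        rcases mul_eq_zero.mp hc0 with h | h
        · exact absurd h hcpos.ne'
        · exact h
      · exact (Finset.sum_eq_zero_iff_of_nonneg hnn').mp h0
    have hge : ∀ v, D i ≤ D v := by
      intro v
      have h := (hev v).1
      have := hm0 v
      linarith
    have hheavy : ∀ v, m v = 0 := by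
      by_contra hcon
      push_neg at hcon
      obtain ⟨h0v, hh⟩ := hcon
      have hmpos : 0 < m h0v := lt_of_le_of_ne (hm0 h0v) (Ne.symm hh)
      obtain ⟨b, hb⟩ := hother h0v
      obtain ⟨p⟩ := hconn.preconnected h0v b
      have hadj : ∃ y, G.Adj h0v y := by
        cases p with
        | nil => exact absurd rfl (Ne.symm hb)
        | cons hadj q => exact ⟨_, hadj⟩
      obtain ⟨y, hy⟩ := hadj
      have hterm := (hev y).2 h0v (Finset.mem_erase.mpr ⟨hy.ne, Finset.mem_univ _⟩)
      have hAyd : A y h0v = (d : ℝ) := by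
        rcases mul_eq_zero.mp hterm with h | h
        · linarith
        · exact absurd h hmpos.ne'
      have hA1 : A y h0v = 1 := by
        have hdist : G.dist y h0v = 1 := SimpleGraph.dist_eq_one_iff_adj.mpr hy.symm
        rw [hAapp, hdist]
        norm_num
      have hdone : (d : ℝ) = 1 := by rw [← hAyd, hA1]
      have hsplit : ∀ w, D w = ∑ x ∈ Finset.univ.erase w, A w x := fun w => by
        rw [← hT w]
        exact (Finset.sum_erase _ (hAdiag w)).symm
      have hle : D h0v ≤ ∑ x ∈ Finset.univ.erase h0v, (1 : ℝ) := by
        rw [hsplit h0v]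
        refine Finset.sum_le_sum fun x _ => ?_
        rw [← hdone]
        exact hAub h0v x
      have hge2 : (∑ x ∈ Finset.univ.erase i, (1 : ℝ)) ≤ D i := by
        rw [hsplit i]
        refine Finset.sum_le_sum fun x hx => ?_
        exact hAlb i x fun h => (Finset.mem_erase.mp hx).1 h.symm
      have hcard : (Finset.univ.erase h0v).card = (Finset.univ.erase i).card := by
        rw [Finset.card_erase_of_mem (Finset.mem_univ _),
          Finset.card_erase_of_mem (Finset.mem_univ _)]
      have hsum1 : (∑ x ∈ Finset.univ.erase h0v, (1 : ℝ)) =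
          ∑ x ∈ Finset.univ.erase i, (1 : ℝ) := by
        rw [Finset.sum_const, Finset.sum_const, hcard]
      have hDle : D h0v ≤ D i := by
        rw [hsum1] at hle
        linarith
      have hDgt : D i < D h0v := by
        have h7 : 0 < max (D h0v - D i) 0 := hmpos
        rcases lt_max_iff.mp h7 with h | h
        · linarith
        · exact absurd h (lt_irrefl 0)
      linarith
    intro v
    have h8 : D v - D i ≤ 0 := by
      have h9 : D v - D i ≤ m v := le_max_left _ _
      rw [hheavy v] at h9
      exact h9
    have := hge v
    linarith
  · -- all transmissions equal → equality
    intro hall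
    have hSz : S = 0 := by
      rw [hSdef]
      apply Finset.sum_eq_zero
      intro k _
      rw [hall k i]
      ring
    have hφD : φ = D i := by
      rw [hφdef, hSz, mul_zero, add_zero, Real.sqrt_sq hDid]
      ring
    have hone : A *ᵥ (fun _ => (1 : ℝ)) = D i • (fun _ => (1 : ℝ)) := by
      funext v
      show (∑ k, A v k * 1) = D i * 1
      simp only [mul_one]
      rw [hT v, hall v i]
    have hone0 : (fun _ : Fin n => (1 : ℝ)) ≠ 0 := by
      intro h
      have := congrFun h ⟨0, by omega⟩
      simp at this
    have hgei : D i ≤ specRad A := le_specRad_of_eig A (hDpos i).le hone0 hone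
    exact le_antisymm hineq (by rw [hφD]; exact hgei)
end

section
/- Let G be a connected graph on n ≥ 2 vertices with transmissions 𝔻₁ ≥ 𝔻₂ ≥ ... ≥ 𝔻_n. Then ρ(𝔻(G)) ≥ (𝔻_n − 1 + √((𝔻_n + 1)² + 4·Σ_{k=1}^{n−1}(𝔻_k − 𝔻_n)))/2. -/
open Matrix Finset Real Polynomial

lemma foldr_max_le_of_mem {m : Multiset ℝ} {a : ℝ} (h : a ∈ m) : a ≤ m.foldr max 0 := by
  induction m using Multiset.induction with
  | empty => simp at h
  | cons b s ih =>
    rw [Multiset.foldr_cons]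
    rcases Multiset.mem_cons.mp h with rfl | h
    · exact le_max_left _ _
    · exact (ih h).trans (le_max_right _ _)

lemma eval_charpoly' {n : ℕ} (A : Matrix (Fin n) (Fin n) ℝ) (μ : ℝ) :
    A.charpoly.eval μ = (μ • (1 : Matrix (Fin n) (Fin n) ℝ) - A).det := by
  rw [Matrix.charpoly, eval_det, Matrix.matPolyEquiv_charmatrix]
  simp only [Polynomial.eval_sub, Polynomial.eval_X, Polynomial.eval_C, Matrix.scalar_apply,
    smul_one_eq_diagonal]

lemma root_le_specRad {n : ℕ} (A : Matrix (Fin n) (Fin n) ℝ) {μ : ℝ}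
    (hv : ∃ v, v ≠ 0 ∧ A *ᵥ v = μ • v) (hμ : 0 ≤ μ) : μ ≤ specRad A := by
  obtain ⟨v, hv0, hAv⟩ := hv
  have hdet : ((μ • (1 : Matrix (Fin n) (Fin n) ℝ)) - A).det = 0 := by
    rw [← Matrix.exists_mulVec_eq_zero_iff]
    exact ⟨v, hv0, by simp [Matrix.sub_mulVec, hAv, Matrix.smul_mulVec]⟩
  have heval : A.charpoly.IsRoot μ := by
    rw [Polynomial.IsRoot, eval_charpoly', hdet]
  have hroot : ((μ : ℂ)) ∈ ((A.map (Complex.ofReal)).charpoly).roots := by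
    rw [show (A.map Complex.ofReal) = A.map (algebraMap ℝ ℂ) from rfl,
      Matrix.charpoly_map A (algebraMap ℝ ℂ)]
    exact (Polynomial.mem_roots ((A.charpoly_monic.map (algebraMap ℝ ℂ)).ne_zero)).mpr
      (heval.map (f := algebraMap ℝ ℂ))
  have : ‖(μ : ℂ)‖ ∈ (((A.map (Complex.ofReal)).charpoly.roots).map
      (fun z => ‖z‖)) := Multiset.mem_map_of_mem _ hroot
  have := foldr_max_le_of_mem this
  simpa [specRad, Complex.norm_real, Real.norm_eq_abs, abs_of_nonneg hμ] using this

lemma exists_eig_ge {n : ℕ} (hn : 0 < n) (A : Matrix (Fin n) (Fin n) ℝ)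
    (hA : A.IsHermitian) :
    ∃ μ : ℝ, (∃ v, v ≠ 0 ∧ A *ᵥ v = μ • v) ∧ (∑ i, ∑ j, A i j) ≤ μ * n := by
  obtain ⟨i₀, -, hmax⟩ := Finset.exists_max_image (univ : Finset (Fin n)) hA.eigenvalues
    ⟨⟨0, hn⟩, mem_univ _⟩
  refine ⟨hA.eigenvalues i₀, ⟨⇑(hA.eigenvectorBasis i₀), ?_, hA.mulVec_eigenvectorBasis i₀⟩, ?_⟩
  · intro h
    have h1 := hA.eigenvectorBasis.orthonormal.1 i₀
    rw [show (hA.eigenvectorBasis i₀) = 0 from by ext t; exact congrFun h t] at h1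
    simp at h1
  · set U : Matrix (Fin n) (Fin n) ℝ := (hA.eigenvectorUnitary : Matrix (Fin n) (Fin n) ℝ)
      with hU
    have hspec : A = U * Matrix.diagonal (RCLike.ofReal ∘ hA.eigenvalues) * star U :=
      hA.spectral_theorem
    have hUU : U * star U = 1 := Matrix.mem_unitaryGroup_iff.mp hA.eigenvectorUnitary.2
    set x : Fin n → ℝ := fun _ => 1 with hx
    set y : Fin n → ℝ := star U *ᵥ x with hy
    have hstar : star U = Uᵀ := by
      rw [Matrix.star_eq_conjTranspose, Matrix.conjTranspose_eq_transpose_of_trivial]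
    have hvecMul : x ᵥ* U = y := by rw [hy, hstar, Matrix.mulVec_transpose]
    have hxAx : x ⬝ᵥ (A *ᵥ x) = ∑ i, hA.eigenvalues i * (y i * y i) := by
      conv_lhs => rw [hspec]
      rw [Matrix.mul_assoc, ← Matrix.mulVec_mulVec, Matrix.dotProduct_mulVec, hvecMul,
        ← Matrix.mulVec_mulVec]
      simp [dotProduct, Matrix.mulVec_diagonal, ← hy, Function.comp, mul_comm,
        mul_left_comm]
    have hyy : y ⬝ᵥ y = (n : ℝ) := by
      conv_lhs => rw [show y ⬝ᵥ y = (x ᵥ* U) ⬝ᵥ (star U *ᵥ x) by rw [hvecMul, hy]]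
      rw [← Matrix.dotProduct_mulVec, Matrix.mulVec_mulVec, hUU, Matrix.one_mulVec]
      simp [hx, dotProduct]
    calc ∑ i, ∑ j, A i j = x ⬝ᵥ (A *ᵥ x) := by
          simp [hx, dotProduct, Matrix.mulVec]
      _ = ∑ i, hA.eigenvalues i * (y i * y i) := hxAx
      _ ≤ ∑ i, hA.eigenvalues i₀ * (y i * y i) :=
          Finset.sum_le_sum fun i _ =>
            mul_le_mul_of_nonneg_right (hmax i (mem_univ i)) (mul_self_nonneg _)
      _ = hA.eigenvalues i₀ * (y ⬝ᵥ y) := by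
          rw [dotProduct, Finset.mul_sum]
      _ = hA.eigenvalues i₀ * n := by rw [hyy]

theorem stmt_13 {n : ℕ} (hn : 2 ≤ n) (G : SimpleGraph (Fin n)) (hconn : G.Connected)
    (D : Fin n → ℝ) (hD : ∀ i, D i = ∑ j, (G.dist i j : ℝ))
    (hord : ∀ i j : Fin n, i ≤ j → D j ≤ D i) :
    specRad (Matrix.of fun i j : Fin n => (G.dist i j : ℝ)) ≥
      (D ⟨n - 1, by omega⟩ - 1 +
        Real.sqrt ((D ⟨n - 1, by omega⟩ + 1) ^ 2 +
          4 * ∑ k ∈ Finset.Iio (⟨n - 1, by omega⟩ : Fin n),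
            (D k - D ⟨n - 1, by omega⟩))) / 2 := by
  have hn0 : 0 < n := by omega
  set A : Matrix (Fin n) (Fin n) ℝ := Matrix.of fun i j : Fin n => (G.dist i j : ℝ) with hAdef
  set L : Fin n := ⟨n - 1, by omega⟩ with hL
  have hsym : A.IsHermitian := by
    ext i j
    simp only [hAdef, Matrix.conjTranspose_apply, Matrix.of_apply, star_trivial]
    rw [G.dist_comm]
  obtain ⟨μ, hvec, hsumA⟩ := exists_eig_ge hn0 A hsym
  set d : ℝ := D L with hd
  set S : ℝ := ∑ k ∈ Finset.Iio L, (D k - D L) with hSdef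
  -- basic facts
  have hdk : ∀ k : Fin n, D L ≤ D k := fun k =>
    hord k L (by rw [Fin.le_def]; simp only [hL]; omega)
  have hS0 : 0 ≤ S := Finset.sum_nonneg fun k _ => sub_nonneg.mpr (hdk k)
  have hdist_nonneg : ∀ i j : Fin n, (0:ℝ) ≤ (G.dist i j : ℝ) := fun i j => Nat.cast_nonneg _
  have hd1 : (n : ℝ) - 1 ≤ d := by
    have h1 : ∀ j ∈ univ.erase L, (1:ℝ) ≤ (G.dist L j : ℝ) := by
      intro j hj
      have hne : L ≠ j := (Finset.ne_of_mem_erase hj).symm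
      exact_mod_cast Nat.one_le_cast.mpr (hconn.pos_dist_of_ne hne)
    have h2 : ∑ j ∈ univ.erase L, (1:ℝ) ≤ ∑ j ∈ univ.erase L, (G.dist L j : ℝ) :=
      Finset.sum_le_sum h1
    have h3 : ∑ j ∈ univ.erase L, (G.dist L j : ℝ) ≤ ∑ j, (G.dist L j : ℝ) :=
      Finset.sum_le_sum_of_subset_of_nonneg (Finset.erase_subset _ _)
        (fun j _ _ => hdist_nonneg L j)
    have h4 : ((univ.erase L).card : ℝ) = (n : ℝ) - 1 := by
      rw [Finset.card_erase_of_mem (mem_univ L), Finset.card_univ, Fintype.card_fin]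
      push_cast [Nat.cast_sub (by omega : 1 ≤ n)]
      ring
    calc (n:ℝ) - 1 = ∑ j ∈ univ.erase L, (1:ℝ) := by rw [Finset.sum_const, nsmul_eq_mul, mul_one, h4]
      _ ≤ ∑ j, (G.dist L j : ℝ) := h2.trans h3
      _ = d := (hD L).symm
  have hIio : Finset.Iio L = univ.erase L := by
    ext k
    simp only [Finset.mem_Iio, Finset.mem_erase, Finset.mem_univ, and_true, Fin.lt_def,
      Ne, Fin.ext_iff, hL]
    omega
  have hsumD : ∑ i, D i = S + n * d := by
    have hcard : ((Finset.Iio L).card : ℝ) = (n : ℝ) - 1 := by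
      rw [hIio, Finset.card_erase_of_mem (mem_univ L), Finset.card_univ, Fintype.card_fin]
      push_cast [Nat.cast_sub (by omega : 1 ≤ n)]
      ring
    have h5 : D L + ∑ k ∈ univ.erase L, D k = ∑ i, D i := Finset.add_sum_erase _ _ (mem_univ L)
    have h6 : S = ∑ k ∈ Finset.Iio L, D k - ((Finset.Iio L).card : ℝ) * d := by
      rw [hSdef, Finset.sum_sub_distrib, Finset.sum_const, nsmul_eq_mul, hd]
    rw [hIio] at h6
    rw [hIio] at hcard
    rw [h6, hcard, ← h5]
    ring
  have hsum' : S + n * d ≤ μ * n := by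
    rw [← hsumD]
    calc ∑ i, D i = ∑ i, ∑ j, A i j := by
          refine Finset.sum_congr rfl fun i _ => ?_
          rw [hD i]
          rfl
      _ ≤ μ * n := hsumA
  set e : ℝ := S / n with he
  have hnR : (0:ℝ) < n := by exact_mod_cast hn0
  have heS : S = e * n := by rw [he, div_mul_cancel₀ _ hnR.ne']
  have he0 : 0 ≤ e := div_nonneg hS0 hnR.le
  have hμde : d + e ≤ μ := by
    have : (d + e) * n ≤ μ * n := by nlinarith [hsum', heS]
    exact le_of_mul_le_mul_right this hnR
  have hd0 : (1:ℝ) ≤ d := by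
    have : (2:ℝ) ≤ n := by exact_mod_cast hn
    linarith
  have hμ0 : 0 ≤ μ := by linarith
  have hspec : μ ≤ specRad A := root_le_specRad A hvec hμ0
  have hpn : (n : ℝ) ≤ d + 1 := by linarith
  have hsqrt : Real.sqrt ((d + 1) ^ 2 + 4 * S) ≤ d + 1 + 2 * e := by
    rw [← Real.sqrt_sq (by linarith : (0:ℝ) ≤ d + 1 + 2 * e)]
    apply Real.sqrt_le_sqrt
    have := mul_le_mul_of_nonneg_left hpn he0
    nlinarith [sq_nonneg e]
  show (d - 1 + Real.sqrt ((d + 1) ^ 2 + 4 * S)) / 2 ≤ specRad A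
  linarith
end

section
/- Let G be a connected graph on n ≥ 2 vertices. For real α, let (^α 𝕄)_i = (Σ_j d_{ij}𝔻_jᵅ)/𝔻_iᵅ be the generalized average transmissions, assumed ordered (^α 𝕄)₁ ≥ ... ≥ (^α 𝕄)_n, and let N = max_{i,j} d_{ij}𝔻_jᵅ/𝔻_iᵅ. Then for each 1 ≤ i ≤ n, ρ(𝔻(G)) ≤ ((^α 𝕄)_i − N + √(((^α 𝕄)_i + N)² + 4N·Σ_{k=1}^{i−1}((^α 𝕄)_k − (^α 𝕄)_i)))/2. -/
open Matrix Finset Real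

lemma foldr_max_le_s14 {ψ : ℝ} (hψ : 0 ≤ ψ) (s : Multiset ℝ) (h : ∀ x ∈ s, x ≤ ψ) :
    s.foldr max 0 ≤ ψ := by
  induction s using Multiset.induction_on with
  | empty => simpa using hψ
  | cons a s ih =>
      rw [Multiset.foldr_cons]
      exact max_le (h a (Multiset.mem_cons_self a s))
        (ih fun x hx => h x (Multiset.mem_cons_of_mem hx))

lemma specRad_le_of_row {n : ℕ} (A : Matrix (Fin n) (Fin n) ℝ)
    (hA : ∀ i j, 0 ≤ A i j) (w : Fin n → ℝ) (hw : ∀ i, 0 < w i)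
    (ψ : ℝ) (hψ : 0 ≤ ψ) (hrow : ∀ k, ∑ j, A k j * w j ≤ ψ * w k) :
    specRad A ≤ ψ := by
  refine foldr_max_le_s14 hψ _ ?_
  intro x hx
  obtain ⟨μ, hμ, rfl⟩ := Multiset.mem_map.mp hx
  set M := A.map (Complex.ofReal) with hM
  have hroot : M.charpoly.IsRoot μ := Polynomial.isRoot_of_mem_roots hμ
  have hdet : (Matrix.diagonal (fun _ : Fin n => μ) - M).det = 0 := by
    have hmap : (charmatrix M).map (Polynomial.evalRingHom μ)
        = Matrix.diagonal (fun _ : Fin n => μ) - M := by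
      ext i j
      by_cases h : i = j
      · subst h
        simp [charmatrix_apply_eq]
      · simp [charmatrix_apply_ne _ _ _ h, Matrix.diagonal_apply_ne _ h]
    have h2 : Polynomial.evalRingHom μ ((charmatrix M).det)
        = ((charmatrix M).map (Polynomial.evalRingHom μ)).det :=
      RingHom.map_det _ _
    have h3 : Polynomial.eval μ M.charpoly = 0 := hroot
    rw [Matrix.charpoly] at h3
    rw [← hmap, ← h2]
    exact h3
  obtain ⟨v, hv0, hvec⟩ := Matrix.exists_mulVec_eq_zero_iff.mpr hdet
  have heig : ∀ k, ∑ j, M k j * v j = μ * v k := by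
    intro k
    have h1 := congrFun hvec k
    rw [Matrix.sub_mulVec] at h1
    have h2 : (Matrix.diagonal (fun _ : Fin n => μ) *ᵥ v) k = μ * v k :=
      Matrix.mulVec_diagonal _ _ _
    have h3 : (M *ᵥ v) k = ∑ j, M k j * v j := rfl
    have := sub_eq_zero.mp h1
    rw [h2, h3] at this
    exact this.symm
  -- choose index maximizing |v j| / w j
  obtain ⟨j₀, hj₀⟩ := Function.ne_iff.mp hv0
  obtain ⟨k, -, hk⟩ := Finset.exists_max_image Finset.univ
    (fun j => ‖v j‖ / w j) ⟨j₀, Finset.mem_univ j₀⟩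
  have hkpos : 0 < ‖v k‖ := by
    have h1 : 0 < ‖v j₀‖ / w j₀ :=
      div_pos (norm_pos_iff.mpr hj₀) (hw j₀)
    have h2 := hk j₀ (Finset.mem_univ j₀)
    have h3 : 0 < ‖v k‖ / w k := lt_of_lt_of_le h1 h2
    by_contra h
    push_neg at h
    have : ‖v k‖ = 0 := le_antisymm h (norm_nonneg _)
    rw [this, zero_div] at h3
    exact lt_irrefl 0 h3
  have hbound : ∀ j, ‖v j‖ ≤ ‖v k‖ / w k * w j := by
    intro j
    have := hk j (Finset.mem_univ j)
    calc ‖v j‖ = ‖v j‖ / w j * w j :=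
          (div_mul_cancel₀ _ (hw j).ne').symm
      _ ≤ ‖v k‖ / w k * w j :=
          mul_le_mul_of_nonneg_right this (hw j).le
  have key : ‖μ‖ * ‖v k‖ ≤ ψ * ‖v k‖ := by
    have h1 : ‖μ‖ * ‖v k‖ = ‖∑ j, M k j * v j‖ := by
      rw [heig k, norm_mul]
    have h2 : ‖∑ j, M k j * v j‖ ≤ ∑ j, A k j * ‖v j‖ := by
      refine le_trans (norm_sum_le _ _) (le_of_eq ?_)
      refine Finset.sum_congr rfl fun j _ => ?_
      rw [norm_mul]
      congr 1
      simp [hM, Matrix.map_apply, Complex.norm_real, Real.norm_eq_abs, abs_of_nonneg (hA k j)]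
    have h3 : ∑ j, A k j * ‖v j‖
        ≤ ∑ j, A k j * (‖v k‖ / w k * w j) :=
      Finset.sum_le_sum fun j _ => mul_le_mul_of_nonneg_left (hbound j) (hA k j)
    have h4 : ∑ j, A k j * (‖v k‖ / w k * w j)
        = ‖v k‖ / w k * ∑ j, A k j * w j := by
      rw [Finset.mul_sum]
      exact Finset.sum_congr rfl fun j _ => by ring
    have h5 : ‖v k‖ / w k * ∑ j, A k j * w j
        ≤ ‖v k‖ / w k * (ψ * w k) :=
      mul_le_mul_of_nonneg_left (hrow k) (div_nonneg (norm_nonneg _) (hw k).le)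
    have h6 : ‖v k‖ / w k * (ψ * w k)
        = ψ * (‖v k‖ / w k * w k) := by ring
    rw [div_mul_cancel₀ _ (hw k).ne'] at h6
    linarith [h1, h2, h3, h4.le, h5, h6.le]
  exact le_of_mul_le_mul_right (by linarith [key]) hkpos

theorem stmt_14 {n : ℕ} (hn : 2 ≤ n) (G : SimpleGraph (Fin n)) (hconn : G.Connected)
    (α : ℝ) (D : Fin n → ℝ) (hD : ∀ i, D i = ∑ j, (G.dist i j : ℝ))
    (𝕄 : Fin n → ℝ)
    (h𝕄 : ∀ i, 𝕄 i = (∑ j, (G.dist i j : ℝ) * (D j) ^ α) / (D i) ^ α)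
    (hord : ∀ i j : Fin n, i ≤ j → 𝕄 j ≤ 𝕄 i)
    (N : ℝ)
    (hN : IsGreatest {x | ∃ i j : Fin n, x = (G.dist i j : ℝ) * (D j) ^ α / (D i) ^ α} N) :
    ∀ i : Fin n,
      specRad (Matrix.of fun i j : Fin n => (G.dist i j : ℝ)) ≤
        (𝕄 i - N +
          Real.sqrt ((𝕄 i + N) ^ 2 + 4 * N * ∑ k ∈ Finset.Iio i, (𝕄 k - 𝕄 i))) / 2 := by
  intro i
  have hnt : Nontrivial (Fin n) := by
    refine ⟨⟨0, by omega⟩, ⟨1, by omega⟩, ?_⟩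
    simp [Fin.ext_iff]
  -- positivity of D
  have hDpos : ∀ j, 0 < D j := by
    intro j
    obtain ⟨j', hj'⟩ := exists_ne j
    have h1 : 0 < G.dist j j' := hconn.pos_dist_of_ne (Ne.symm hj')
    have h2 : (1 : ℝ) ≤ (G.dist j j' : ℝ) := by exact_mod_cast h1
    rw [hD]
    have h3 : (G.dist j j' : ℝ) ≤ ∑ k, (G.dist j k : ℝ) :=
      Finset.single_le_sum (f := fun k => (G.dist j k : ℝ))
        (fun k _ => Nat.cast_nonneg _) (Finset.mem_univ j')
    linarith
  have hPpos : ∀ j, (0:ℝ) < D j ^ α := fun j => Real.rpow_pos_of_pos (hDpos j) α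
  have hMpos : ∀ k, 0 < 𝕄 k := by
    intro k
    obtain ⟨j', hj'⟩ := exists_ne k
    rw [h𝕄]
    refine div_pos ?_ (hPpos k)
    have h1 : 0 < G.dist k j' := hconn.pos_dist_of_ne (Ne.symm hj')
    have h2 : (0:ℝ) < (G.dist k j' : ℝ) * D j' ^ α := by
      have : (1 : ℝ) ≤ (G.dist k j' : ℝ) := by exact_mod_cast h1
      nlinarith [hPpos j']
    refine lt_of_lt_of_le h2 (Finset.single_le_sum
      (f := fun l => (G.dist k l : ℝ) * D l ^ α)
      (fun l _ => mul_nonneg (Nat.cast_nonneg _) (hPpos l).le) (Finset.mem_univ j'))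
  have hN0 : 0 ≤ N := by
    refine hN.2 ⟨i, i, ?_⟩
    simp [SimpleGraph.dist_self]
  have hBle : ∀ k j, (G.dist k j : ℝ) * D j ^ α ≤ N * D k ^ α := by
    intro k j
    have h1 : (G.dist k j : ℝ) * D j ^ α / D k ^ α ≤ N := hN.2 ⟨k, j, rfl⟩
    exact (div_le_iff₀ (hPpos k)).mp h1
  have hMsum : ∀ k, ∑ j, (G.dist k j : ℝ) * D j ^ α = 𝕄 k * D k ^ α := by
    intro k
    rw [h𝕄, div_mul_cancel₀ _ (hPpos k).ne']
  set S := ∑ k ∈ Finset.Iio i, (𝕄 k - 𝕄 i) with hSdef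
  have hS0 : 0 ≤ S := by
    refine Finset.sum_nonneg fun k hk => ?_
    have : k < i := Finset.mem_Iio.mp hk
    linarith [hord k i this.le]
  have hdisc : 0 ≤ (𝕄 i + N) ^ 2 + 4 * N * S := by
    have : 0 ≤ 4 * N * S := by positivity
    nlinarith [sq_nonneg (𝕄 i + N)]
  set s := Real.sqrt ((𝕄 i + N) ^ 2 + 4 * N * S) with hsdef
  have hs0 : 0 ≤ s := Real.sqrt_nonneg _
  have hs2 : s ^ 2 = (𝕄 i + N) ^ 2 + 4 * N * S := Real.sq_sqrt hdisc
  have hsge : 𝕄 i + N ≤ s := by nlinarith [hMpos i]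
  set ψ := (𝕄 i - N + s) / 2 with hψdef
  have hψM : 𝕄 i ≤ ψ := by rw [hψdef]; linarith
  have hψ0 : 0 ≤ ψ := le_trans (hMpos i).le hψM
  have hc : 0 < ψ + N := by linarith [hMpos i]
  have hid : ψ * (ψ + N) = 𝕄 i * ψ + N * 𝕄 i + N * S := by
    rw [hψdef]
    linear_combination hs2 / 4
  -- weights
  set z : Fin n → ℝ := fun j => 1 + (𝕄 j - 𝕄 i) / (ψ + N) with hzdef
  have hcz : ∀ j, (ψ + N) * z j = (ψ + N) + (𝕄 j - 𝕄 i) := by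
    intro j
    rw [hzdef]
    field_simp
  have hzpos : ∀ j, 0 < z j := by
    intro j
    have h1 : 0 < (ψ + N) + (𝕄 j - 𝕄 i) := by linarith [hMpos j]
    nlinarith [hcz j]
  set w : Fin n → ℝ := fun j => D j ^ α * z j with hwdef
  have hwpos : ∀ j, 0 < w j := fun j => mul_pos (hPpos j) (hzpos j)
  refine specRad_le_of_row _ (fun k j => by simp only [Matrix.of_apply]; positivity) w hwpos ψ hψ0 ?_
  intro k
  -- row condition
  rw [← mul_le_mul_iff_right₀ hc]
  have hL : (ψ + N) * ∑ j, (Matrix.of fun i j : Fin n => (G.dist i j : ℝ)) k j * w j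
      = (ψ + N) * (𝕄 k * D k ^ α)
        + ∑ j, (G.dist k j : ℝ) * D j ^ α * (𝕄 j - 𝕄 i) := by
    rw [Finset.mul_sum]
    have h1 : ∀ j : Fin n, (ψ + N) * ((Matrix.of fun i j : Fin n => (G.dist i j : ℝ)) k j * w j)
        = (ψ + N) * ((G.dist k j : ℝ) * D j ^ α)
          + (G.dist k j : ℝ) * D j ^ α * (𝕄 j - 𝕄 i) := by
      intro j
      have h2 : (ψ + N) * ((Matrix.of fun i j : Fin n => (G.dist i j : ℝ)) k j * w j)
          = (G.dist k j : ℝ) * D j ^ α * ((ψ + N) * z j) := by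
        simp only [Matrix.of_apply, hwdef]
        ring
      rw [h2, hcz j]
      ring
    rw [Finset.sum_congr rfl fun j _ => h1 j, Finset.sum_add_distrib, ← Finset.mul_sum, hMsum k]
  have hR : (ψ + N) * (ψ * w k) = ψ * D k ^ α * ((ψ + N) + (𝕄 k - 𝕄 i)) := by
    have h2 : (ψ + N) * (ψ * w k) = ψ * D k ^ α * ((ψ + N) * z k) := by
      simp only [hwdef]; ring
    rw [h2, hcz k]
  rw [hL, hR]
  -- bound the correction term T
  by_cases hki : k < i
  · -- case k < i
    have hT : ∑ j, (G.dist k j : ℝ) * D j ^ α * (𝕄 j - 𝕄 i)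
        ≤ N * D k ^ α * S - N * D k ^ α * (𝕄 k - 𝕄 i) := by
      have h1 : ∀ j : Fin n, (G.dist k j : ℝ) * D j ^ α * (𝕄 j - 𝕄 i)
          ≤ if j ∈ Finset.Iio i \ {k} then N * D k ^ α * (𝕄 j - 𝕄 i) else 0 := by
        intro j
        by_cases hj : j ∈ Finset.Iio i \ {k}
        · rw [if_pos hj]
          obtain ⟨hj1, _⟩ := Finset.mem_sdiff.mp hj
          have hji : j < i := Finset.mem_Iio.mp hj1
          have h2 : 0 ≤ 𝕄 j - 𝕄 i := by linarith [hord j i hji.le]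
          exact mul_le_mul_of_nonneg_right (hBle k j) h2
        · rw [if_neg hj]
          by_cases hjk : j = k
          · subst hjk
            simp [SimpleGraph.dist_self]
          · have hji : ¬ j < i := by
              intro hlt
              exact hj (Finset.mem_sdiff.mpr ⟨Finset.mem_Iio.mpr hlt,
                by simpa using hjk⟩)
            have h2 : 𝕄 j - 𝕄 i ≤ 0 := by
              have : i ≤ j := le_of_not_gt hji
              linarith [hord i j this]
            have h3 : 0 ≤ (G.dist k j : ℝ) * D j ^ α :=
              mul_nonneg (Nat.cast_nonneg _) (hPpos j).le
            exact mul_nonpos_of_nonneg_of_nonpos h3 h2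
      have h4 := Finset.sum_le_sum fun j (_ : j ∈ Finset.univ) => h1 j
      have h5 : ∑ j, (if j ∈ Finset.Iio i \ {k} then N * D k ^ α * (𝕄 j - 𝕄 i) else 0)
          = ∑ j ∈ Finset.Iio i \ {k}, N * D k ^ α * (𝕄 j - 𝕄 i) := by
        rw [Finset.sum_ite_mem, Finset.univ_inter]
      have h6 : ∑ j ∈ Finset.Iio i, N * D k ^ α * (𝕄 j - 𝕄 i)
          = ∑ j ∈ Finset.Iio i \ {k}, N * D k ^ α * (𝕄 j - 𝕄 i)
            + N * D k ^ α * (𝕄 k - 𝕄 i) :=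
        Finset.sum_eq_sum_sdiff_singleton_add (Finset.mem_Iio.mpr hki) _
      have h7 : ∑ j ∈ Finset.Iio i, N * D k ^ α * (𝕄 j - 𝕄 i) = N * D k ^ α * S := by
        rw [hSdef, Finset.mul_sum]
      linarith [h4, h5.le, h6, h7]
    have hkey : (ψ + N) * (𝕄 k * D k ^ α)
        + (N * D k ^ α * S - N * D k ^ α * (𝕄 k - 𝕄 i))
        ≤ ψ * D k ^ α * ((ψ + N) + (𝕄 k - 𝕄 i)) := by
      have heq : (ψ + N) * (𝕄 k * D k ^ α)
          + (N * D k ^ α * S - N * D k ^ α * (𝕄 k - 𝕄 i))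
          = ψ * D k ^ α * ((ψ + N) + (𝕄 k - 𝕄 i)) := by
        linear_combination (-(D k ^ α)) * hid
      exact heq.le
    linarith [hT, hkey]
  · -- case i ≤ k
    have hik : i ≤ k := le_of_not_gt hki
    have hT : ∑ j, (G.dist k j : ℝ) * D j ^ α * (𝕄 j - 𝕄 i) ≤ N * D k ^ α * S := by
      have h1 : ∀ j : Fin n, (G.dist k j : ℝ) * D j ^ α * (𝕄 j - 𝕄 i)
          ≤ if j ∈ Finset.Iio i then N * D k ^ α * (𝕄 j - 𝕄 i) else 0 := by
        intro j
        by_cases hj : j ∈ Finset.Iio i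
        · rw [if_pos hj]
          have hji : j < i := Finset.mem_Iio.mp hj
          have h2 : 0 ≤ 𝕄 j - 𝕄 i := by linarith [hord j i hji.le]
          exact mul_le_mul_of_nonneg_right (hBle k j) h2
        · rw [if_neg hj]
          have h2 : 𝕄 j - 𝕄 i ≤ 0 := by
            have : i ≤ j := le_of_not_gt (fun hlt => hj (Finset.mem_Iio.mpr hlt))
            linarith [hord i j this]
          have h3 : 0 ≤ (G.dist k j : ℝ) * D j ^ α :=
            mul_nonneg (Nat.cast_nonneg _) (hPpos j).le
          exact mul_nonpos_of_nonneg_of_nonpos h3 h2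
      have h4 := Finset.sum_le_sum fun j (_ : j ∈ Finset.univ) => h1 j
      have h5 : ∑ j, (if j ∈ Finset.Iio i then N * D k ^ α * (𝕄 j - 𝕄 i) else 0)
          = ∑ j ∈ Finset.Iio i, N * D k ^ α * (𝕄 j - 𝕄 i) := by
        rw [Finset.sum_ite_mem, Finset.univ_inter]
      have h7 : ∑ j ∈ Finset.Iio i, N * D k ^ α * (𝕄 j - 𝕄 i) = N * D k ^ α * S := by
        rw [hSdef, Finset.mul_sum]
      linarith [h4, h5.le, h7]
    have hNM : N * 𝕄 k ≤ N * 𝕄 i := mul_le_mul_of_nonneg_left (hord i k hik) hN0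
    have hkey : (ψ + N) * (𝕄 k * D k ^ α) + N * D k ^ α * S
        ≤ ψ * D k ^ α * ((ψ + N) + (𝕄 k - 𝕄 i)) := by
      nlinarith [hid, hPpos k, hNM, mul_le_mul_of_nonneg_right hNM (hPpos k).le]
    linarith [hT, hkey]
end
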